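/- For every prime power q ≥ 2, the integer (q^6 + q^3 + 1)/gcd(3, q-1) is coprime to q*(q^5 - 1)*(q^8 - 1)*(q^12 - 1). -/

import Mathlib

/-- For a prime power `q ≥ 2`, `(q^6 + q^3 + 1)/gcd(3, q-1)` is coprime to
`q (q^5-1)(q^8-1)(q^12-1)`. -/
theorem E6_components_coprime (q : ℕ) (hq : IsPrimePow q) (hq2 : 2 ≤ q) :
    Nat.Coprime ((q ^ 6 + q ^ 3 + 1) / Nat.gcd 3 (q - 1))
      (q * (q ^ 5 - 1) * (q ^ 8 - 1) * (q ^ 12 - 1)) := by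
  have h1q : 1 ≤ q := by omega
  have h3 : 1 ≤ q ^ 3 := Nat.one_le_pow _ _ (by omega)
  have h6 : 1 ≤ q ^ 6 := Nat.one_le_pow _ _ (by omega)
  have h9le : 1 ≤ q ^ 9 := Nat.one_le_pow _ _ (by omega)
  have h10le : 1 ≤ q ^ 10 := Nat.one_le_pow _ _ (by omega)
  have h12le : 1 ≤ q ^ 12 := Nat.one_le_pow _ _ (by omega)
  set N := q ^ 6 + q ^ 3 + 1 with hN
  set K := q * (q ^ 5 - 1) * (q ^ 8 - 1) * (q ^ 12 - 1) with hK
  -- N is coprime to q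
  have hNq : Nat.Coprime N q := by
    have hmod : N % q = 1 := by
      have h : N = 1 + (q ^ 5 + q ^ 2) * q := by ring
      rw [h, Nat.add_mul_mod_self_right, Nat.mod_eq_of_lt (by omega)]
    rw [Nat.Coprime, Nat.gcd_comm, Nat.gcd_rec, hmod, Nat.gcd_one_left]
  -- N divides q^9 - 1
  have hN9 : N ∣ q ^ 9 - 1 := by
    refine ⟨q ^ 3 - 1, ?_⟩
    obtain ⟨c, hc⟩ : ∃ c, q ^ 3 = c + 1 := ⟨q ^ 3 - 1, by omega⟩
    have h9 : q ^ 9 = (c + 1) ^ 3 := by rw [show q ^ 9 = (q ^ 3) ^ 3 by ring, hc]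
    have h6' : q ^ 6 = (c + 1) ^ 2 := by rw [show q ^ 6 = (q ^ 3) ^ 2 by ring, hc]
    rw [hN, h9, h6', hc, Nat.add_sub_cancel,
      Nat.sub_eq_iff_eq_add (Nat.one_le_pow _ _ (Nat.succ_pos c))]
    simp only [Nat.succ_eq_add_one]
    ring
  have d31 : q - 1 ∣ q ^ 3 - 1 := by simpa using Nat.sub_dvd_pow_sub_pow q 1 3
  have d63 : q ^ 3 - 1 ∣ q ^ 6 - 1 := by
    rw [show q ^ 6 = (q ^ 3) ^ 2 by ring]
    simpa using Nat.sub_dvd_pow_sub_pow (q ^ 3) 1 2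
  -- key: any common divisor of N and q^3 - 1 divides 3
  have keyA : ∀ e : ℕ, e ∣ N → e ∣ q ^ 3 - 1 → e ∣ 3 := by
    intro e he1 he2
    have he6 : e ∣ q ^ 6 - 1 := he2.trans d63
    have h : e ∣ N - (q ^ 6 - 1) - (q ^ 3 - 1) := Nat.dvd_sub (Nat.dvd_sub he1 he6) he2
    have heq : N - (q ^ 6 - 1) - (q ^ 3 - 1) = 3 := by omega
    rwa [heq] at h
  -- gcd N (q^5-1) divides 3
  have g5 : Nat.gcd N (q ^ 5 - 1) ∣ 3 := by
    set e := Nat.gcd N (q ^ 5 - 1) with he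
    have he1 : e ∣ N := Nat.gcd_dvd_left _ _
    have he2 : e ∣ q ^ 5 - 1 := Nat.gcd_dvd_right _ _
    have he10 : e ∣ q ^ 10 - 1 := by
      refine he2.trans ?_
      rw [show q ^ 10 = (q ^ 5) ^ 2 by ring]
      simpa using Nat.sub_dvd_pow_sub_pow (q ^ 5) 1 2
    have he9 : e ∣ q ^ 9 - 1 := he1.trans hN9
    have hle : q ^ 9 - 1 ≤ q ^ 10 - 1 := by
      have : q ^ 9 ≤ q ^ 10 := Nat.pow_le_pow_right (by omega) (by omega)
      omega
    have heq : q ^ 10 - 1 - (q ^ 9 - 1) = q ^ 9 * (q - 1) := by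
      zify [h9le, h10le, hle, h1q]
      ring
    have hd : e ∣ q ^ 9 * (q - 1) := by rw [← heq]; exact Nat.dvd_sub he10 he9
    have hcq : Nat.Coprime e (q ^ 9) :=
      ((Nat.Coprime.coprime_dvd_left he1 hNq).pow_right 9)
    have hd1 : e ∣ q - 1 := hcq.dvd_of_dvd_mul_left hd
    exact keyA e he1 (hd1.trans d31)
  -- gcd N (q^8-1) divides 3
  have g8 : Nat.gcd N (q ^ 8 - 1) ∣ 3 := by
    set e := Nat.gcd N (q ^ 8 - 1) with he
    have he1 : e ∣ N := Nat.gcd_dvd_left _ _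
    have he2 : e ∣ q ^ 8 - 1 := Nat.gcd_dvd_right _ _
    have he9 : e ∣ q ^ 9 - 1 := he1.trans hN9
    have h8le : 1 ≤ q ^ 8 := Nat.one_le_pow _ _ (by omega)
    have hle : q ^ 8 - 1 ≤ q ^ 9 - 1 := by
      have : q ^ 8 ≤ q ^ 9 := Nat.pow_le_pow_right (by omega) (by omega)
      omega
    have heq : q ^ 9 - 1 - (q ^ 8 - 1) = q ^ 8 * (q - 1) := by
      zify [h8le, h9le, hle, h1q]
      ring
    have hd : e ∣ q ^ 8 * (q - 1) := by rw [← heq]; exact Nat.dvd_sub he9 he2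
    have hcq : Nat.Coprime e (q ^ 8) :=
      ((Nat.Coprime.coprime_dvd_left he1 hNq).pow_right 8)
    have hd1 : e ∣ q - 1 := hcq.dvd_of_dvd_mul_left hd
    exact keyA e he1 (hd1.trans d31)
  -- gcd N (q^12-1) divides 3
  have g12 : Nat.gcd N (q ^ 12 - 1) ∣ 3 := by
    set e := Nat.gcd N (q ^ 12 - 1) with he
    have he1 : e ∣ N := Nat.gcd_dvd_left _ _
    have he2 : e ∣ q ^ 12 - 1 := Nat.gcd_dvd_right _ _
    have he9 : e ∣ q ^ 12 - q ^ 3 := by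
      have : q ^ 12 - q ^ 3 = q ^ 3 * (q ^ 9 - 1) := by
        zify [h9le, show q ^ 3 ≤ q ^ 12 from Nat.pow_le_pow_right (by omega) (by omega)]
        ring
      rw [this]
      exact Dvd.dvd.mul_left (he1.trans hN9) _
    have heq : q ^ 12 - 1 - (q ^ 12 - q ^ 3) = q ^ 3 - 1 := by
      have : q ^ 3 ≤ q ^ 12 := Nat.pow_le_pow_right (by omega) (by omega)
      omega
    have hd : e ∣ q ^ 3 - 1 := by rw [← heq]; exact Nat.dvd_sub he2 he9
    exact keyA e he1 hd
  -- gcd N K divides 27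
  have hgK : Nat.gcd N K ∣ 27 := by
    have g1 : Nat.gcd N q ∣ 1 := hNq.dvd
    have A := Nat.gcd_mul_right_dvd_mul_gcd N (q * (q ^ 5 - 1) * (q ^ 8 - 1)) (q ^ 12 - 1)
    have B := Nat.gcd_mul_right_dvd_mul_gcd N (q * (q ^ 5 - 1)) (q ^ 8 - 1)
    have C := Nat.gcd_mul_right_dvd_mul_gcd N q (q ^ 5 - 1)
    have h27 : ((1 * 3) * 3) * 3 ∣ 27 := by norm_num
    calc Nat.gcd N K ∣ Nat.gcd N (q * (q ^ 5 - 1) * (q ^ 8 - 1)) * Nat.gcd N (q ^ 12 - 1) := A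
      _ ∣ ((Nat.gcd N (q * (q ^ 5 - 1))) * Nat.gcd N (q ^ 8 - 1)) * Nat.gcd N (q ^ 12 - 1) :=
          mul_dvd_mul B dvd_rfl
      _ ∣ (((Nat.gcd N q * Nat.gcd N (q ^ 5 - 1)) * Nat.gcd N (q ^ 8 - 1))) * Nat.gcd N (q ^ 12 - 1) :=
          mul_dvd_mul (mul_dvd_mul C dvd_rfl) dvd_rfl
      _ ∣ ((1 * 3) * 3) * 3 :=
          mul_dvd_mul (mul_dvd_mul (mul_dvd_mul g1 g5) g8) g12
      _ ∣ 27 := h27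
  -- final goal
  set D := Nat.gcd 3 (q - 1) with hD
  set M := N / D with hM
  set G := Nat.gcd M K with hG
  show Nat.Coprime M K
  by_cases hq3 : q % 3 = 1
  · -- 3 divides N but 9 does not
    have hD3 : D = 3 := Nat.gcd_eq_left (by omega)
    have e3 := Nat.pow_mod q 3 3
    have e6 := Nat.pow_mod q 6 3
    rw [hq3] at e3 e6
    norm_num at e3 e6
    have h3N : 3 ∣ N := by omega
    have hr3 : q % 9 % 3 = 1 := by
      rw [Nat.mod_mod_of_dvd _ (by norm_num : (3:ℕ) ∣ 9)]; exact hq3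
    have hr9 : q % 9 < 9 := Nat.mod_lt _ (by norm_num)
    have f3 := Nat.pow_mod q 3 9
    have f6 := Nat.pow_mod q 6 9
    have h9N : ¬ (9 ∣ N) := by
      interval_cases h : q % 9 <;> norm_num at f3 f6 <;> omega
    have hMN : M ∣ N := by rw [hM, hD3]; exact Nat.div_dvd_of_dvd h3N
    have hNM : N = 3 * M := by rw [hM, hD3, Nat.mul_div_cancel' h3N]
    have hM3 : ¬ (3 ∣ M) := by
      intro ⟨c, hc⟩
      exact h9N ⟨c, by omega⟩
    have hGN : G ∣ 27 := (Nat.dvd_gcd ((Nat.gcd_dvd_left _ _).trans hMN) (Nat.gcd_dvd_right _ _)).trans hgK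
    have hG3 : ¬ (3 ∣ G) := fun h => hM3 (h.trans (Nat.gcd_dvd_left _ _))
    have hcop : Nat.Coprime G 3 :=
      (Nat.coprime_comm.mp ((Nat.prime_three.coprime_iff_not_dvd).mpr hG3))
    exact (hcop.pow_right 3).eq_one_of_dvd (by norm_num at hGN ⊢; exact hGN)
  · -- 3 does not divide N
    have hD1 : D = 1 := by
      rw [hD]
      exact (Nat.prime_three.coprime_iff_not_dvd).mpr (by omega)
    have hMN : M = N := by rw [hM, hD1, Nat.div_one]
    have e3 := Nat.pow_mod q 3 3
    have e6 := Nat.pow_mod q 6 3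
    have hq30 : q % 3 = 0 ∨ q % 3 = 2 := by omega
    have h3N : ¬ (3 ∣ N) := by
      rcases hq30 with h | h <;> rw [h] at e3 e6 <;> norm_num at e3 e6 <;> omega
    have hGN : G ∣ 27 := by
      rw [hG, hMN]
      exact hgK
    have hG3 : ¬ (3 ∣ G) := fun h => h3N (h.trans (by rw [hG, hMN] at *; exact Nat.gcd_dvd_left _ _))
    have hcop : Nat.Coprime G 3 :=
      (Nat.coprime_comm.mp ((Nat.prime_three.coprime_iff_not_dvd).mpr hG3))
    exact (hcop.pow_right 3).eq_one_of_dvd (by norm_num at hGN ⊢; exact hGN)
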